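/- Suppose that the quotient group Γ/Z is ICC, i.e. every conjugacy class of Γ/Z other than that of the identity is infinite. Let a : Γ → ℂ be a function satisfying: (i) a(gz) = χ(z)·a(g) for all g ∈ Γ and z ∈ Z; (ii) a(hgh⁻¹) = a(g) for all g, h ∈ Γ; (iii) the function Γ/Z → ℝ sending the coset gZ to |a(g)|² (well defined by (i), since |χ(z)| = 1 for all z ∈ Z) is summable. Then a(g) = 0 for every g ∈ Γ with g ∉ Z. -/

import Mathlib

/-- Suppose `Γ/Z` is ICC (every non-identity conjugacy class of `Γ/Z` is
infinite), where `Z` is a finite subgroup of the center of `Γ` and `χ : Z → ℂˣ` is a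
character.  If `a : Γ → ℂ` satisfies (i) `a(gz) = χ(z)·a(g)`, (ii) `a(hgh⁻¹) = a(g)`, and
(iii) the induced function `Γ/Z → ℝ`, `gZ ↦ |a(g)|²`, is summable, then `a(g) = 0` for every
`g ∉ Z`. -/
theorem icc_invariant_function_supported_on_center {Γ : Type*} [Group Γ]
    (Z : Subgroup Γ) [Finite Z] [Z.Normal] (hZ : Z ≤ Subgroup.center Γ) (χ : Z →* ℂˣ)
    (hICC : ∀ q : Γ ⧸ Z, q ≠ 1 → {q' : Γ ⧸ Z | IsConj q q'}.Infinite)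
    (a : Γ → ℂ)
    (hi : ∀ (g : Γ) (z : Z), a (g * (z : Γ)) = (χ z : ℂ) * a g)
    (hii : ∀ g h : Γ, a (h * g * h⁻¹) = a g)
    (hiii : Summable fun q : Γ ⧸ Z => Complex.normSq (a (Quotient.out q))) :
    ∀ g : Γ, g ∉ Z → a g = 0 := by
  -- χ takes values of norm 1
  have hnorm : ∀ z : Z, Complex.normSq ((χ z : ℂˣ) : ℂ) = 1 := by
    intro z
    have hz : ((χ z : ℂˣ) : ℂ) ^ orderOf z = 1 := by
      rw [← Units.val_pow_eq_pow_val, ← map_pow, pow_orderOf_eq_one, map_one, Units.val_one]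
    have hn : orderOf z ≠ 0 := (orderOf_pos z).ne'
    have h1 := Complex.norm_eq_one_of_pow_eq_one hz hn
    rw [Complex.normSq_eq_norm_sq, h1]; norm_num
  -- normSq ∘ a is constant on cosets
  have hcoset : ∀ g g' : Γ, (g : Γ ⧸ Z) = (g' : Γ ⧸ Z) →
      Complex.normSq (a g) = Complex.normSq (a g') := by
    intro g g' h
    rw [QuotientGroup.eq] at h
    have : g' = g * (⟨g⁻¹ * g', h⟩ : Z) := by simp [mul_assoc]
    rw [this, hi, Complex.normSq_mul, hnorm, one_mul]
  intro g hg
  have hq1 : (g : Γ ⧸ Z) ≠ 1 := by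
    simpa [QuotientGroup.eq_one_iff] using hg
  have hS := hICC (g : Γ ⧸ Z) hq1
  -- the function is constant on the conjugacy class of g
  have hconst : ∀ q' ∈ {q' : Γ ⧸ Z | IsConj (g : Γ ⧸ Z) q'},
      Complex.normSq (a (Quotient.out q')) = Complex.normSq (a g) := by
    intro q' hq'
    obtain ⟨c, hc⟩ := hq'
    obtain ⟨h, hh⟩ := QuotientGroup.mk_surjective c.val
    have hmk : ((h * g * h⁻¹ : Γ) : Γ ⧸ Z) = q' := by
      have hc' : (c : Γ ⧸ Z) * (g : Γ ⧸ Z) * (c : Γ ⧸ Z)⁻¹ = q' := by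
        rw [hc.eq]; group
      rw [← hc']
      push_cast [← hh]
      rfl
    have hout : ((Quotient.out q' : Γ) : Γ ⧸ Z) = q' := Quotient.out_eq q'
    have := hcoset (Quotient.out q') (h * g * h⁻¹) (by rw [hout, hmk])
    rw [this, hii]
  -- summability forces the constant value to be 0
  have hns : Complex.normSq (a g) = 0 := by
    by_contra hne
    have hsub : Summable fun s : {q' : Γ ⧸ Z | IsConj (g : Γ ⧸ Z) q'} =>
        Complex.normSq (a (Quotient.out s.val)) := hiii.subtype _
    haveI : Infinite {q' : Γ ⧸ Z | IsConj (g : Γ ⧸ Z) q'} := hS.to_subtype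
    have heq : (fun s : {q' : Γ ⧸ Z | IsConj (g : Γ ⧸ Z) q'} =>
        Complex.normSq (a (Quotient.out s.val))) = fun _ => Complex.normSq (a g) := by
      funext s; exact hconst s.val s.property
    rw [heq] at hsub
    have h0 := hsub.tendsto_cofinite_zero
    have h1 : Filter.Tendsto (fun _ : {q' : Γ ⧸ Z | IsConj (g : Γ ⧸ Z) q'} =>
        Complex.normSq (a g)) Filter.cofinite (nhds (Complex.normSq (a g))) :=
      tendsto_const_nhds
    exact hne (tendsto_nhds_unique h1 h0)
  exact Complex.normSq_eq_zero.mp hns
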